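/- arXiv:2009.01515 — 3 statements merged into one kernel-verified Lean document; each statement's English description precedes it below -/
import Mathlib

section
/- Let $n \ge 5$ and $x \in \mathbb{R}^n$. There exists a constant $C = C(n) > 0$ such that $\int_{\mathbb{R}^n} |x - z|^{2-n}\, (1+|z|)^{-n-2}\, dz \le C\, (1+|x|)^{2-n}$. -/
open MeasureTheory

open Metric Set ENNReal in
/-- Bound for the lintegral of `‖c - z‖ ^ (2 - n)` over a ball of radius `δ` around `c`. -/
private lemma stmt13_ball_bound {n : ℕ} (hn : 5 ≤ n) (c : EuclideanSpace ℝ (Fin n))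
    {δ : ℝ} (hδ : 0 < δ) :
    ∫⁻ z in ball c δ, ENNReal.ofReal (‖c - z‖ ^ ((2 : ℝ) - (n : ℝ)))
      ≤ ENNReal.ofReal (2 ^ (n + 1) * δ ^ 2) *
        volume (ball (0 : EuclideanSpace ℝ (Fin n)) 1) := by
  have hnR : (5 : ℝ) ≤ (n : ℝ) := by exact_mod_cast hn
  have hexp : (2 : ℝ) - (n : ℝ) ≤ 0 := by linarith
  haveI : Nontrivial (EuclideanSpace ℝ (Fin n)) :=
    Module.nontrivial_of_finrank_pos (R := ℝ) (by rw [finrank_euclideanSpace_fin]; omega)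
  set v := volume (ball (0 : EuclideanSpace ℝ (Fin n)) 1) with hv
  set g : EuclideanSpace ℝ (Fin n) → ℝ≥0∞ := fun z => ENNReal.ofReal (‖c - z‖ ^ ((2 : ℝ) - (n : ℝ))) with hg
  set A : ℕ → Set (EuclideanSpace ℝ (Fin n)) := fun k => ball c (δ / 2 ^ k) \ ball c (δ / 2 ^ (k + 1)) with hA
  -- the ball is covered by the center and the dyadic annuli
  have hsub : ball c δ ⊆ {c} ∪ ⋃ k, A k := by
    intro z hz
    by_cases hzc : z = c
    · exact Or.inl (by simp [hzc])
    · right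
      have hr0 : 0 < dist z c := dist_pos.2 hzc
      have hrδ : dist z c < δ := mem_ball.1 hz
      have hex : ∃ k : ℕ, δ / 2 ^ (k + 1) ≤ dist z c := by
        obtain ⟨k, hk⟩ := pow_unbounded_of_one_lt (δ / dist z c) (one_lt_two (α := ℝ))
        refine ⟨k, ?_⟩
        rw [div_le_iff₀ (by positivity)]
        rw [div_lt_iff₀ hr0] at hk
        have h2 : (2 : ℝ) ^ k ≤ 2 ^ (k + 1) := by
          apply pow_le_pow_right₀ (by norm_num); omega
        nlinarith
      set k0 := Nat.find hex with hk0
      have hspec : δ / 2 ^ (k0 + 1) ≤ dist z c := Nat.find_spec hex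
      have hlt : dist z c < δ / 2 ^ k0 := by
        rcases Nat.eq_zero_or_pos k0 with h0 | hpos
        · rw [h0]; simpa using hrδ
        · obtain ⟨j, hj⟩ := Nat.exists_eq_add_of_lt hpos
          have := Nat.find_min hex (m := k0 - 1) (by omega)
          push_neg at this
          have hk0j : k0 - 1 + 1 = k0 := by omega
          rwa [hk0j] at this
      exact mem_iUnion.2 ⟨k0, mem_ball.2 hlt, fun h => absurd (mem_ball.1 h) (not_lt.2 hspec)⟩
  -- per-annulus bound
  have hAk : ∀ k : ℕ, ∫⁻ z in A k, g z ≤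
      ENNReal.ofReal (2 ^ n * δ ^ 2) * (2 : ℝ≥0∞)⁻¹ ^ k * v := by
    intro k
    have hrk : 0 < δ / 2 ^ (k + 1) := by positivity
    have step1 : ∫⁻ z in A k, g z ≤
        ENNReal.ofReal ((δ / 2 ^ (k + 1)) ^ ((2 : ℝ) - (n : ℝ))) * volume (A k) := by
      rw [← setLIntegral_const]
      apply setLIntegral_mono' (measurableSet_ball.diff measurableSet_ball)
      intro z hz
      have hz2 : δ / 2 ^ (k + 1) ≤ dist z c := not_lt.1 fun h => hz.2 (mem_ball.2 h)
      have hcz : δ / 2 ^ (k + 1) ≤ ‖c - z‖ := by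
        rwa [← dist_eq_norm, dist_comm]
      exact ofReal_le_ofReal
        (Real.rpow_le_rpow_of_nonpos hrk hcz hexp)
    have step2 : volume (A k) ≤ ENNReal.ofReal ((δ / 2 ^ k) ^ n) * v := by
      refine le_trans (measure_mono diff_subset) ?_
      rw [Measure.addHaar_ball _ _ (by positivity : (0:ℝ) ≤ δ / 2 ^ k)]
      rw [finrank_euclideanSpace_fin]
    have step3 : ENNReal.ofReal ((δ / 2 ^ (k + 1)) ^ ((2 : ℝ) - (n : ℝ))) *
        (ENNReal.ofReal ((δ / 2 ^ k) ^ n) * v)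
        ≤ ENNReal.ofReal (2 ^ n * δ ^ 2) * (2 : ℝ≥0∞)⁻¹ ^ k * v := by
      rw [← mul_assoc, ← ENNReal.ofReal_mul (Real.rpow_nonneg hrk.le _)]
      apply mul_le_mul_left
      have halg : (δ / 2 ^ (k + 1)) ^ ((2 : ℝ) - (n : ℝ)) * (δ / 2 ^ k) ^ n
          = 2 ^ n * (δ / 2 ^ (k + 1)) ^ 2 := by
        have h2r : δ / 2 ^ k = 2 * (δ / 2 ^ (k + 1)) := by
          rw [pow_succ]; field_simp
        rw [h2r, mul_pow]
        rw [show ((δ / 2 ^ (k + 1)) ^ ((2 : ℝ) - (n : ℝ)) * ((2:ℝ) ^ n * (δ / 2 ^ (k + 1)) ^ n))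
            = (2:ℝ) ^ n * ((δ / 2 ^ (k + 1)) ^ ((2 : ℝ) - (n : ℝ)) * (δ / 2 ^ (k + 1)) ^ n)
            from by ring]
        congr 1
        rw [← Real.rpow_natCast (δ / 2 ^ (k + 1)) n, ← Real.rpow_add hrk,
          ← Real.rpow_natCast (δ / 2 ^ (k + 1)) 2]
        norm_num
      rw [halg]
      have hsq : (δ / 2 ^ (k + 1)) ^ 2 ≤ δ ^ 2 * ((2 : ℝ)⁻¹) ^ k := by
        rw [div_pow, inv_pow, ← div_eq_mul_inv]
        apply div_le_div_of_nonneg_left (by positivity) (by positivity)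
        calc (2:ℝ) ^ k ≤ 2 ^ (2 * (k + 1)) := by
              apply pow_le_pow_right₀ (by norm_num); omega
          _ = ((2:ℝ) ^ (k + 1)) ^ 2 := by rw [← pow_mul]; ring_nf
      calc ENNReal.ofReal (2 ^ n * (δ / 2 ^ (k + 1)) ^ 2)
          ≤ ENNReal.ofReal (2 ^ n * δ ^ 2 * ((2 : ℝ)⁻¹) ^ k) := by
            apply ofReal_le_ofReal; nlinarith [pow_pos (show (0:ℝ) < 2 by norm_num) n]
        _ = ENNReal.ofReal (2 ^ n * δ ^ 2) * (2 : ℝ≥0∞)⁻¹ ^ k := by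
            rw [ENNReal.ofReal_mul (by positivity), ENNReal.ofReal_pow (by norm_num)]
            congr 2
            rw [ENNReal.ofReal_inv_of_pos (by norm_num)]
            norm_num
    exact le_trans (le_trans step1 (mul_le_mul_right step2 _)) step3
  -- put everything together
  show ∫⁻ z in ball c δ, g z ≤ ENNReal.ofReal (2 ^ (n + 1) * δ ^ 2) * v
  calc ∫⁻ z in ball c δ, g z ≤ ∫⁻ z in {c} ∪ ⋃ k, A k, g z := lintegral_mono_set hsub
    _ ≤ (∫⁻ z in {c}, g z) + ∫⁻ z in ⋃ k, A k, g z := lintegral_union_le _ _ _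
    _ ≤ 0 + ∑' k, ∫⁻ z in A k, g z := by
        apply add_le_add
        · have : ∀ z ∈ ({c} : Set (EuclideanSpace ℝ (Fin n))), g z ≤ 0 := by
            intro z hz
            rw [mem_singleton_iff] at hz
            rw [hg]
            simp only [hz, sub_self, norm_zero,
              Real.zero_rpow (show ((2 : ℝ) - (n : ℝ)) ≠ 0 from by linarith)]
            simp
          calc ∫⁻ z in {c}, g z ≤ ∫⁻ _ in ({c} : Set (EuclideanSpace ℝ (Fin n))), 0 :=
                setLIntegral_mono' (measurableSet_singleton c) this
            _ = 0 := by simp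
        · exact lintegral_iUnion_le _ _
    _ ≤ 0 + ∑' k : ℕ, ENNReal.ofReal (2 ^ n * δ ^ 2) * (2 : ℝ≥0∞)⁻¹ ^ k * v :=
        add_le_add le_rfl (ENNReal.tsum_le_tsum hAk)
    _ = ENNReal.ofReal (2 ^ n * δ ^ 2) * v * ∑' k : ℕ, (2 : ℝ≥0∞)⁻¹ ^ k := by
        rw [zero_add]
        rw [show (fun k : ℕ => ENNReal.ofReal (2 ^ n * δ ^ 2) * (2 : ℝ≥0∞)⁻¹ ^ k * v)
            = fun k : ℕ => ENNReal.ofReal (2 ^ n * δ ^ 2) * v * (2 : ℝ≥0∞)⁻¹ ^ k from by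
          funext k; ring]
        rw [ENNReal.tsum_mul_left]
    _ = ENNReal.ofReal (2 ^ (n + 1) * δ ^ 2) * v := by
        rw [ENNReal.tsum_geometric, ENNReal.one_sub_inv_two, inv_inv]
        rw [mul_comm (ENNReal.ofReal (2 ^ n * δ ^ 2) * v) 2, ← mul_assoc]
        congr 1
        rw [show (2 : ℝ≥0∞) = ENNReal.ofReal 2 from by norm_num,
          ← ENNReal.ofReal_mul (by norm_num)]
        congr 1
        ring

/-- Giraud-type convolution estimate: for `n ≥ 5` there is `C = C(n) > 0` with
`∫ |x-z|^(2-n) (1+|z|)^(-n-2) dz ≤ C (1+|x|)^(2-n)` for all `x ∈ ℝⁿ`. -/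
theorem stmt_13 (n : ℕ) (hn : 5 ≤ n) :
    ∃ C > (0 : ℝ), ∀ x : EuclideanSpace ℝ (Fin n),
      (∫ z : EuclideanSpace ℝ (Fin n),
          ‖x - z‖ ^ ((2 : ℝ) - (n : ℝ)) * (1 + ‖z‖) ^ (-(n : ℝ) - 2))
        ≤ C * (1 + ‖x‖) ^ ((2 : ℝ) - (n : ℝ)) := by
  classical
  open Metric Set ENNReal in
  have hnR : (5 : ℝ) ≤ (n : ℝ) := by exact_mod_cast hn
  have hexp : (2 : ℝ) - (n : ℝ) ≤ 0 := by linarith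
  set E := EuclideanSpace ℝ (Fin n) with hE
  set v := volume (Metric.ball (0 : E) 1) with hv
  have hvfin : v ≠ ⊤ := measure_ball_lt_top.ne
  set J := ∫⁻ z : E, ENNReal.ofReal ((1 + ‖z‖) ^ (-(n : ℝ) - 2)) with hJdef
  have hJ : J < ⊤ := by
    have := finite_integral_one_add_norm (E := E) (μ := volume) (r := (n : ℝ) + 2)
      (by rw [finrank_euclideanSpace_fin]; linarith)
    rw [hJdef]
    convert this using 3 with z
    ring_nf
  set M := ENNReal.ofReal (2 ^ (n + 3)) * v + J with hM
  have hMfin : M ≠ ⊤ := by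
    rw [hM]
    exact (ENNReal.add_lt_top.2 ⟨ENNReal.mul_lt_top ENNReal.ofReal_lt_top
      measure_ball_lt_top, hJ⟩).ne
  refine ⟨2 ^ ((n : ℝ) - 2) * (M.toReal + 1), by positivity, fun x => ?_⟩
  set δ := (1 + ‖x‖) / 2 with hδdef
  have hδ : 0 < δ := by positivity
  have hδhalf : 1 / 2 ≤ δ := by
    rw [hδdef]
    have := norm_nonneg x
    linarith
  set F : E → ℝ := fun z => ‖x - z‖ ^ ((2 : ℝ) - (n : ℝ)) * (1 + ‖z‖) ^ (-(n : ℝ) - 2)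
    with hF
  have hFnn : ∀ z, 0 ≤ F z := fun z =>
    mul_nonneg (Real.rpow_nonneg (norm_nonneg _) _) (Real.rpow_nonneg (by positivity) _)
  have hFmeas : Measurable F := by
    apply Measurable.mul
    · exact ((measurable_const.sub measurable_id).norm).pow measurable_const
    · exact ((measurable_const.add measurable_norm)).pow measurable_const
  have hrw : (∫ z : E, F z) = (∫⁻ z : E, ENNReal.ofReal (F z)).toReal :=
    integral_eq_lintegral_of_nonneg_ae (Filter.Eventually.of_forall hFnn)
      hFmeas.aestronglyMeasurable
  -- bound the lintegral
  have key : (∫⁻ z : E, ENNReal.ofReal (F z)) ≤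
      ENNReal.ofReal (δ ^ ((2 : ℝ) - (n : ℝ))) * M := by
    rw [← lintegral_add_compl (fun z => ENNReal.ofReal (F z))
      (measurableSet_ball : MeasurableSet (Metric.ball x δ))]
    have piece1 : (∫⁻ z in Metric.ball x δ, ENNReal.ofReal (F z)) ≤
        ENNReal.ofReal (δ ^ ((2 : ℝ) - (n : ℝ))) * (ENNReal.ofReal (2 ^ (n + 3)) * v) := by
      have pw : ∀ z ∈ Metric.ball x δ, ENNReal.ofReal (F z) ≤
          ENNReal.ofReal (δ ^ (-(n : ℝ) - 2)) *
            ENNReal.ofReal (‖x - z‖ ^ ((2 : ℝ) - (n : ℝ))) := by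
        intro z hz
        rw [← ENNReal.ofReal_mul (Real.rpow_nonneg hδ.le _)]
        apply ENNReal.ofReal_le_ofReal
        have h1z : δ ≤ 1 + ‖z‖ := by
          have h1 : ‖x‖ - ‖z‖ ≤ ‖x - z‖ := norm_sub_norm_le x z
          have h2 : ‖x - z‖ < δ := by
            rw [← dist_eq_norm, dist_comm]; exact mem_ball.1 hz
          rw [hδdef] at h2 ⊢
          linarith
        have h3 : (1 + ‖z‖) ^ (-(n : ℝ) - 2) ≤ δ ^ (-(n : ℝ) - 2) :=
          Real.rpow_le_rpow_of_nonpos hδ h1z (by linarith)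
        calc F z ≤ ‖x - z‖ ^ ((2 : ℝ) - (n : ℝ)) * δ ^ (-(n : ℝ) - 2) :=
              mul_le_mul_of_nonneg_left h3 (Real.rpow_nonneg (norm_nonneg _) _)
          _ = δ ^ (-(n : ℝ) - 2) * ‖x - z‖ ^ ((2 : ℝ) - (n : ℝ)) := by ring
      calc (∫⁻ z in Metric.ball x δ, ENNReal.ofReal (F z))
          ≤ ∫⁻ z in Metric.ball x δ, ENNReal.ofReal (δ ^ (-(n : ℝ) - 2)) *
              ENNReal.ofReal (‖x - z‖ ^ ((2 : ℝ) - (n : ℝ))) :=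
            setLIntegral_mono' measurableSet_ball pw
        _ = ENNReal.ofReal (δ ^ (-(n : ℝ) - 2)) *
              ∫⁻ z in Metric.ball x δ, ENNReal.ofReal (‖x - z‖ ^ ((2 : ℝ) - (n : ℝ))) :=
            lintegral_const_mul' _ _ ENNReal.ofReal_ne_top
        _ ≤ ENNReal.ofReal (δ ^ (-(n : ℝ) - 2)) *
              (ENNReal.ofReal (2 ^ (n + 1) * δ ^ 2) * v) :=
            mul_le_mul_right (stmt13_ball_bound hn x hδ) _
        _ ≤ ENNReal.ofReal (δ ^ ((2 : ℝ) - (n : ℝ))) * (ENNReal.ofReal (2 ^ (n + 3)) * v) := by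
            rw [← mul_assoc, ← mul_assoc]
            apply mul_le_mul_left
            rw [← ENNReal.ofReal_mul (Real.rpow_nonneg hδ.le _),
              ← ENNReal.ofReal_mul (Real.rpow_nonneg hδ.le _)]
            apply ENNReal.ofReal_le_ofReal
            have e1 : δ ^ (-(n : ℝ) - 2) * δ ^ 2 =
                δ ^ ((2 : ℝ) - (n : ℝ)) * δ ^ (-(2 : ℝ)) := by
              rw [← Real.rpow_natCast δ 2, ← Real.rpow_add hδ, ← Real.rpow_add hδ]
              congr 1
              push_cast
              ring
            have e2 : δ ^ (-(2 : ℝ)) ≤ 4 := by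
              rw [show (-(2:ℝ)) = -((2:ℕ):ℝ) from by norm_num, Real.rpow_neg hδ.le,
                Real.rpow_natCast]
              calc (δ ^ 2)⁻¹ ≤ (((1:ℝ)/2) ^ 2)⁻¹ := by
                    apply inv_anti₀ (by norm_num)
                    nlinarith
                _ = 4 := by norm_num
            have e3 : (0:ℝ) ≤ δ ^ ((2 : ℝ) - (n : ℝ)) := Real.rpow_nonneg hδ.le _
            have e4 : (0:ℝ) < (2:ℝ) ^ (n + 1) := by positivity
            calc δ ^ (-(n : ℝ) - 2) * (2 ^ (n + 1) * δ ^ 2)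
                = 2 ^ (n + 1) * (δ ^ (-(n : ℝ) - 2) * δ ^ 2) := by ring
              _ = 2 ^ (n + 1) * (δ ^ ((2 : ℝ) - (n : ℝ)) * δ ^ (-(2 : ℝ))) := by rw [e1]
              _ ≤ 2 ^ (n + 1) * (δ ^ ((2 : ℝ) - (n : ℝ)) * 4) :=
                  mul_le_mul_of_nonneg_left (mul_le_mul_of_nonneg_left e2 e3) e4.le
              _ = δ ^ ((2 : ℝ) - (n : ℝ)) * (2 ^ (n + 1) * 4) := by ring
              _ = δ ^ ((2 : ℝ) - (n : ℝ)) * 2 ^ (n + 3) := by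
                  congr 1
                  ring
    have piece2 : (∫⁻ z in (Metric.ball x δ)ᶜ, ENNReal.ofReal (F z)) ≤
        ENNReal.ofReal (δ ^ ((2 : ℝ) - (n : ℝ))) * J := by
      have pw : ∀ z ∈ (Metric.ball x δ)ᶜ, ENNReal.ofReal (F z) ≤
          ENNReal.ofReal (δ ^ ((2 : ℝ) - (n : ℝ))) *
            ENNReal.ofReal ((1 + ‖z‖) ^ (-(n : ℝ) - 2)) := by
        intro z hz
        rw [← ENNReal.ofReal_mul (Real.rpow_nonneg hδ.le _)]
        apply ENNReal.ofReal_le_ofReal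
        have h2 : δ ≤ ‖x - z‖ := by
          rw [← dist_eq_norm, dist_comm]
          exact not_lt.1 fun h => hz (mem_ball.2 h)
        have h3 : ‖x - z‖ ^ ((2 : ℝ) - (n : ℝ)) ≤ δ ^ ((2 : ℝ) - (n : ℝ)) :=
          Real.rpow_le_rpow_of_nonpos hδ h2 hexp
        exact mul_le_mul_of_nonneg_right h3 (Real.rpow_nonneg (by positivity) _)
      calc (∫⁻ z in (Metric.ball x δ)ᶜ, ENNReal.ofReal (F z))
          ≤ ∫⁻ z in (Metric.ball x δ)ᶜ, ENNReal.ofReal (δ ^ ((2 : ℝ) - (n : ℝ))) *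
              ENNReal.ofReal ((1 + ‖z‖) ^ (-(n : ℝ) - 2)) :=
            setLIntegral_mono' measurableSet_ball.compl pw
        _ = ENNReal.ofReal (δ ^ ((2 : ℝ) - (n : ℝ))) *
              ∫⁻ z in (Metric.ball x δ)ᶜ, ENNReal.ofReal ((1 + ‖z‖) ^ (-(n : ℝ) - 2)) :=
            lintegral_const_mul' _ _ ENNReal.ofReal_ne_top
        _ ≤ ENNReal.ofReal (δ ^ ((2 : ℝ) - (n : ℝ))) * J :=
            mul_le_mul_right (setLIntegral_le_lintegral _ _) _
    calc (∫⁻ z in Metric.ball x δ, ENNReal.ofReal (F z)) +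
            (∫⁻ z in (Metric.ball x δ)ᶜ, ENNReal.ofReal (F z))
        ≤ ENNReal.ofReal (δ ^ ((2 : ℝ) - (n : ℝ))) * (ENNReal.ofReal (2 ^ (n + 3)) * v) +
            ENNReal.ofReal (δ ^ ((2 : ℝ) - (n : ℝ))) * J := add_le_add piece1 piece2
      _ = ENNReal.ofReal (δ ^ ((2 : ℝ) - (n : ℝ))) * M := by rw [hM, mul_add]
  -- convert back to a real inequality
  rw [hrw]
  have hfin : ENNReal.ofReal (δ ^ ((2 : ℝ) - (n : ℝ))) * M ≠ ⊤ :=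
    ENNReal.mul_ne_top ENNReal.ofReal_ne_top hMfin
  have h1 : (∫⁻ z : E, ENNReal.ofReal (F z)).toReal ≤
      (ENNReal.ofReal (δ ^ ((2 : ℝ) - (n : ℝ))) * M).toReal :=
    ENNReal.toReal_mono hfin key
  have h2 : (ENNReal.ofReal (δ ^ ((2 : ℝ) - (n : ℝ))) * M).toReal =
      δ ^ ((2 : ℝ) - (n : ℝ)) * M.toReal := by
    rw [ENNReal.toReal_mul, ENNReal.toReal_ofReal (Real.rpow_nonneg hδ.le _)]
  have hδpow : δ ^ ((2 : ℝ) - (n : ℝ)) =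
      2 ^ ((n : ℝ) - 2) * (1 + ‖x‖) ^ ((2 : ℝ) - (n : ℝ)) := by
    rw [hδdef, div_eq_mul_inv,
      Real.mul_rpow (by positivity) (by positivity),
      Real.inv_rpow (by norm_num), ← Real.rpow_neg (by norm_num), neg_sub]
    ring
  have hMnn : 0 ≤ M.toReal := ENNReal.toReal_nonneg
  have hbase : (0:ℝ) ≤ (1 + ‖x‖) ^ ((2 : ℝ) - (n : ℝ)) := Real.rpow_nonneg (by positivity) _
  have h2n : (0:ℝ) < 2 ^ ((n : ℝ) - 2) := Real.rpow_pos_of_pos (by norm_num) _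
  calc (∫⁻ z : E, ENNReal.ofReal (F z)).toReal
      ≤ δ ^ ((2 : ℝ) - (n : ℝ)) * M.toReal := by rw [← h2]; exact h1
    _ = 2 ^ ((n : ℝ) - 2) * (1 + ‖x‖) ^ ((2 : ℝ) - (n : ℝ)) * M.toReal := by rw [hδpow]
    _ ≤ 2 ^ ((n : ℝ) - 2) * (M.toReal + 1) * (1 + ‖x‖) ^ ((2 : ℝ) - (n : ℝ)) := by
        nlinarith
end

section
/- Let $n \ge 7$ and $0 < \mu_j \le \mu_i$. With $U_{\mu,\xi}(x) = \mu^{-\frac{n-2}{2}}(1+\frac{|x-\xi|^2}{n(n-2)\mu^2})^{1-n/2}$ and any $\xi_i, \xi_j \in \mathbb{R}^n$, there is a constant $C = C(n)$ with $\int_{\mathbb{R}^n} U_{\mu_i,\xi_i}^{\frac{4}{n-2}}\, U_{\mu_j,\xi_j}^2\, dx \le C\, \Big(\frac{\mu_j}{\mu_i}\Big)^{2}\,$ if $n \ge 7$, and in particular this integral tends to $0$ when $\mu_j/\mu_i \to 0$. -/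
open MeasureTheory Filter

/-- The standard bubble `U₀(x) = (1 + |x|²/(n(n-2)))^(1-n/2)` on `ℝⁿ`. -/
noncomputable def U0 (n : ℕ) (x : EuclideanSpace ℝ (Fin n)) : ℝ :=
  (1 + ‖x‖ ^ 2 / ((n : ℝ) * ((n : ℝ) - 2))) ^ ((1 : ℝ) - (n : ℝ) / 2)

/-- The rescaled/translated bubble `U_{μ,ξ}(x) = μ^(-(n-2)/2) U₀((x-ξ)/μ)`. -/
noncomputable def Ubub (n : ℕ) (μ : ℝ) (ξ x : EuclideanSpace ℝ (Fin n)) : ℝ :=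
  μ ^ (-(((n : ℝ) - 2) / 2)) * U0 n (μ⁻¹ • (x - ξ))

/-- The geometric Laplacian `Δ = -∑ᵢ ∂ᵢ²` on `ℝⁿ`. -/
noncomputable def lap {n : ℕ} (f : EuclideanSpace ℝ (Fin n) → ℝ)
    (x : EuclideanSpace ℝ (Fin n)) : ℝ :=
  -∑ i : Fin n, fderiv ℝ (fun y => fderiv ℝ f y (EuclideanSpace.single i 1)) x
      (EuclideanSpace.single i 1)

variable {n : ℕ}

lemma hc_ge (hn : 7 ≤ n) : (1:ℝ) ≤ (n : ℝ) * ((n : ℝ) - 2) := by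
  have h7 : (7:ℝ) ≤ (n:ℝ) := by exact_mod_cast hn
  nlinarith

lemma base_pos (hn : 7 ≤ n) (x : EuclideanSpace ℝ (Fin n)) :
    (1:ℝ) ≤ 1 + ‖x‖ ^ 2 / ((n : ℝ) * ((n : ℝ) - 2)) := by
  have hc : (0:ℝ) < (n:ℝ) * ((n:ℝ) - 2) := lt_of_lt_of_le one_pos (hc_ge hn)
  have : (0:ℝ) ≤ ‖x‖ ^ 2 / ((n : ℝ) * ((n : ℝ) - 2)) := by positivity
  linarith

lemma exp_nonpos (hn : 7 ≤ n) : (1 : ℝ) - (n : ℝ) / 2 ≤ 0 := by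
  have h7 : (7:ℝ) ≤ (n:ℝ) := by exact_mod_cast hn
  linarith

lemma U0_pos (hn : 7 ≤ n) (x : EuclideanSpace ℝ (Fin n)) : 0 < U0 n x := by
  exact Real.rpow_pos_of_pos (lt_of_lt_of_le one_pos (base_pos hn x)) _

lemma U0_le_one (hn : 7 ≤ n) (x : EuclideanSpace ℝ (Fin n)) : U0 n x ≤ 1 :=
  Real.rpow_le_one_of_one_le_of_nonpos (base_pos hn x) (exp_nonpos hn)

lemma U0_continuous (hn : 7 ≤ n) : Continuous (U0 n) := by
  apply Continuous.rpow_const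
  · fun_prop
  · intro x
    exact Or.inl (ne_of_gt (lt_of_lt_of_le one_pos (base_pos hn x)))

lemma U0_sq_eq (hn : 7 ≤ n) (x : EuclideanSpace ℝ (Fin n)) :
    U0 n x ^ 2 = (1 + ‖x‖ ^ 2 / ((n : ℝ) * ((n : ℝ) - 2))) ^ (-((n:ℝ) - 2)) := by
  have hb : (0:ℝ) ≤ 1 + ‖x‖ ^ 2 / ((n : ℝ) * ((n : ℝ) - 2)) :=
    le_trans zero_le_one (base_pos hn x)
  rw [U0, ← Real.rpow_natCast (_ ^ _) 2, ← Real.rpow_mul hb]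
  norm_num
  ring_nf

lemma U0_sq_integrable (hn : 7 ≤ n) :
    Integrable (fun x : EuclideanSpace ℝ (Fin n) => U0 n x ^ 2) := by
  set c : ℝ := (n : ℝ) * ((n : ℝ) - 2) with hc
  have hc1 : (1:ℝ) ≤ c := hc_ge hn
  have hc0 : (0:ℝ) < c := lt_of_lt_of_le one_pos hc1
  have hn2 : (0:ℝ) ≤ (n:ℝ) - 2 := by
    have h7 : (7:ℝ) ≤ (n:ℝ) := by exact_mod_cast hn
    linarith
  have hr : (Module.finrank ℝ (EuclideanSpace ℝ (Fin n)) : ℝ) < 2 * ((n:ℝ) - 2) := by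
    rw [finrank_euclideanSpace_fin]
    have h7 : (7:ℝ) ≤ (n:ℝ) := by exact_mod_cast hn
    linarith
  have hint := integrable_rpow_neg_one_add_norm_sq
    (μ := (volume : Measure (EuclideanSpace ℝ (Fin n)))) hr
  refine ((hint.const_mul (c ^ ((n:ℝ) - 2))).mono'
    (((U0_continuous hn).pow 2).aestronglyMeasurable) (Eventually.of_forall fun x => ?_))
  have hU : 0 ≤ U0 n x ^ 2 := sq_nonneg _
  rw [Real.norm_of_nonneg hU, U0_sq_eq hn x]
  have h1 : (1 + ‖x‖ ^ 2) / c ≤ 1 + ‖x‖ ^ 2 / c := by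
    rw [add_div]
    have : 1 / c ≤ 1 := by rw [div_le_one hc0]; exact hc1
    linarith
  have h2 : (0:ℝ) < (1 + ‖x‖ ^ 2) / c := by positivity
  have h3 := Real.rpow_le_rpow_of_nonpos h2 h1 (by linarith : -((n:ℝ) - 2) ≤ 0)
  calc (1 + ‖x‖ ^ 2 / c) ^ (-((n:ℝ) - 2)) ≤ ((1 + ‖x‖ ^ 2) / c) ^ (-((n:ℝ) - 2)) := h3
    _ = c ^ ((n:ℝ) - 2) * (1 + ‖x‖ ^ 2) ^ (-(2 * ((n:ℝ) - 2)) / 2) := by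
        rw [div_eq_mul_inv, Real.mul_rpow (by positivity) (by positivity),
          Real.inv_rpow hc0.le, ← Real.rpow_neg hc0.le, neg_neg]
        ring_nf

lemma Ubub_sq_eq (hn : 7 ≤ n) {μ : ℝ} (hμ : 0 < μ) (ξ x : EuclideanSpace ℝ (Fin n)) :
    Ubub n μ ξ x ^ 2 = μ ^ ((2:ℝ) - (n:ℝ)) * U0 n (μ⁻¹ • (x - ξ)) ^ 2 := by
  rw [Ubub, mul_pow, ← Real.rpow_natCast (μ ^ _) 2, ← Real.rpow_mul hμ.le]
  congr 2
  push_cast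
  ring

lemma Ubub_sq_integrable (hn : 7 ≤ n) {μ : ℝ} (hμ : 0 < μ) (ξ : EuclideanSpace ℝ (Fin n)) :
    Integrable (fun x => Ubub n μ ξ x ^ 2) := by
  have h := ((U0_sq_integrable hn).comp_smul (inv_ne_zero hμ.ne')).comp_sub_right ξ
  have h2 := h.const_mul (μ ^ ((2:ℝ) - (n:ℝ)))
  exact h2.congr (Eventually.of_forall fun x => (Ubub_sq_eq hn hμ ξ x).symm)

lemma integral_Ubub_sq (hn : 7 ≤ n) {μ : ℝ} (hμ : 0 < μ) (ξ : EuclideanSpace ℝ (Fin n)) :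
    ∫ x, Ubub n μ ξ x ^ 2 = μ ^ 2 * ∫ x, U0 n x ^ 2 := by
  simp_rw [Ubub_sq_eq hn hμ ξ]
  rw [integral_const_mul]
  have h1 : ∫ x, U0 n (μ⁻¹ • (x - ξ)) ^ 2 = ∫ x, U0 n (μ⁻¹ • x) ^ 2 :=
    integral_sub_right_eq_self (fun y => U0 n (μ⁻¹ • y) ^ 2) ξ
  rw [h1, Measure.integral_comp_inv_smul_of_nonneg volume (fun y => U0 n y ^ 2) hμ.le,
    finrank_euclideanSpace_fin, smul_eq_mul, ← mul_assoc]
  congr 1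
  rw [← Real.rpow_natCast μ n, ← Real.rpow_add hμ, ← Real.rpow_natCast μ 2]
  congr 1
  push_cast
  ring

lemma Ubub_pos (hn : 7 ≤ n) {μ : ℝ} (hμ : 0 < μ) (ξ x : EuclideanSpace ℝ (Fin n)) :
    0 < Ubub n μ ξ x :=
  mul_pos (Real.rpow_pos_of_pos hμ _) (U0_pos hn _)

lemma Ubub_continuous (hn : 7 ≤ n) {μ : ℝ} (hμ : 0 < μ) (ξ : EuclideanSpace ℝ (Fin n)) :
    Continuous (Ubub n μ ξ) :=
  continuous_const.mul ((U0_continuous hn).comp (by fun_prop))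

lemma main_bound (hn : 7 ≤ n) (μi μj : ℝ) (ξi ξj : EuclideanSpace ℝ (Fin n))
    (hj : 0 < μj) (hij : μj ≤ μi) :
    (∫ x : EuclideanSpace ℝ (Fin n),
        Ubub n μi ξi x ^ ((4 : ℝ) / ((n : ℝ) - 2)) * Ubub n μj ξj x ^ 2)
      ≤ (∫ x : EuclideanSpace ℝ (Fin n), U0 n x ^ 2) * (μj / μi) ^ 2 := by
  have hi : 0 < μi := lt_of_lt_of_le hj hij
  have h7 : (7:ℝ) ≤ (n:ℝ) := by exact_mod_cast hn
  have hn2 : (0:ℝ) < (n:ℝ) - 2 := by linarith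
  have hpt : ∀ x, Ubub n μi ξi x ^ ((4:ℝ)/((n:ℝ)-2)) ≤ (μi⁻¹) ^ 2 := by
    intro x
    have h1 : Ubub n μi ξi x ≤ μi ^ (-(((n:ℝ)-2)/2)) := by
      rw [Ubub]
      calc μi ^ (-(((n:ℝ)-2)/2)) * U0 n (μi⁻¹ • (x - ξi))
          ≤ μi ^ (-(((n:ℝ)-2)/2)) * 1 :=
            mul_le_mul_of_nonneg_left (U0_le_one hn _) (Real.rpow_nonneg hi.le _)
        _ = _ := mul_one _
    have h2 : (0:ℝ) ≤ (4:ℝ)/((n:ℝ)-2) := by positivity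
    calc Ubub n μi ξi x ^ ((4:ℝ)/((n:ℝ)-2))
        ≤ (μi ^ (-(((n:ℝ)-2)/2))) ^ ((4:ℝ)/((n:ℝ)-2)) :=
          Real.rpow_le_rpow (Ubub_pos hn hi ξi x).le h1 h2
      _ = μi ^ ((-(((n:ℝ)-2)/2)) * ((4:ℝ)/((n:ℝ)-2))) := by
          rw [← Real.rpow_mul hi.le]
      _ = μi ^ ((-2 : ℤ) : ℝ) := by
          congr 1
          push_cast
          field_simp
          ring
      _ = (μi⁻¹) ^ 2 := by
          rw [Real.rpow_intCast, zpow_neg, ← inv_zpow]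
          norm_cast
  set g := fun x : EuclideanSpace ℝ (Fin n) => (μi⁻¹) ^ 2 * Ubub n μj ξj x ^ 2 with hgdef
  have hg : Integrable g := (Ubub_sq_integrable hn hj ξj).const_mul _
  have hfg : ∀ x, Ubub n μi ξi x ^ ((4:ℝ)/((n:ℝ)-2)) * Ubub n μj ξj x ^ 2 ≤ g x :=
    fun x => mul_le_mul_of_nonneg_right (hpt x) (sq_nonneg _)
  have hf_cont : Continuous (fun x : EuclideanSpace ℝ (Fin n) =>
      Ubub n μi ξi x ^ ((4:ℝ)/((n:ℝ)-2)) * Ubub n μj ξj x ^ 2) := by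
    apply Continuous.mul
    · exact (Ubub_continuous hn hi ξi).rpow_const
        (fun x => Or.inl (ne_of_gt (Ubub_pos hn hi ξi x)))
    · exact (Ubub_continuous hn hj ξj).pow 2
  have hfnn : ∀ x, 0 ≤ Ubub n μi ξi x ^ ((4:ℝ)/((n:ℝ)-2)) * Ubub n μj ξj x ^ 2 :=
    fun x => mul_nonneg (Real.rpow_nonneg (Ubub_pos hn hi ξi x).le _) (sq_nonneg _)
  have hf : Integrable (fun x : EuclideanSpace ℝ (Fin n) =>
      Ubub n μi ξi x ^ ((4:ℝ)/((n:ℝ)-2)) * Ubub n μj ξj x ^ 2) := by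
    refine hg.mono' hf_cont.aestronglyMeasurable (Eventually.of_forall fun x => ?_)
    rw [Real.norm_of_nonneg (hfnn x)]
    exact hfg x
  calc (∫ x : EuclideanSpace ℝ (Fin n),
        Ubub n μi ξi x ^ ((4:ℝ)/((n:ℝ)-2)) * Ubub n μj ξj x ^ 2)
      ≤ ∫ x, g x := integral_mono hf hg hfg
    _ = (μi⁻¹) ^ 2 * (μj ^ 2 * ∫ x, U0 n x ^ 2) := by
        rw [hgdef, integral_const_mul, integral_Ubub_sq hn hj]
    _ = (∫ x : EuclideanSpace ℝ (Fin n), U0 n x ^ 2) * (μj / μi) ^ 2 := by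
        rw [div_pow, inv_pow]
        field_simp


/-- Interaction estimate between two bubbles of scales `μⱼ ≤ μᵢ`: for `n ≥ 7`,
`∫ U_{μᵢ,ξᵢ}^(4/(n-2)) U_{μⱼ,ξⱼ}² dx ≤ C(n) (μⱼ/μᵢ)²`; in particular the integral tends
to `0` along any family with `μⱼ/μᵢ → 0`. -/
theorem stmt_17 (n : ℕ) (hn : 7 ≤ n) :
    ∃ C > (0 : ℝ),
      (∀ (μi μj : ℝ) (ξi ξj : EuclideanSpace ℝ (Fin n)), 0 < μj → μj ≤ μi →
        (∫ x : EuclideanSpace ℝ (Fin n),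
            Ubub n μi ξi x ^ ((4 : ℝ) / ((n : ℝ) - 2)) * Ubub n μj ξj x ^ 2)
          ≤ C * (μj / μi) ^ 2) ∧
      (∀ (μ ν : ℕ → ℝ) (ξ η : ℕ → EuclideanSpace ℝ (Fin n)),
        (∀ m, 0 < ν m) → (∀ m, ν m ≤ μ m) →
        Tendsto (fun m => ν m / μ m) atTop (nhds 0) →
        Tendsto (fun m => ∫ x : EuclideanSpace ℝ (Fin n),
            Ubub n (μ m) (ξ m) x ^ ((4 : ℝ) / ((n : ℝ) - 2)) * Ubub n (ν m) (η m) x ^ 2)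
          atTop (nhds 0)) := by
  set I := ∫ x : EuclideanSpace ℝ (Fin n), U0 n x ^ 2 with hI
  have hI0 : 0 ≤ I := integral_nonneg fun x => sq_nonneg _
  have key : ∀ (μi μj : ℝ) (ξi ξj : EuclideanSpace ℝ (Fin n)), 0 < μj → μj ≤ μi →
      (∫ x : EuclideanSpace ℝ (Fin n),
          Ubub n μi ξi x ^ ((4 : ℝ) / ((n : ℝ) - 2)) * Ubub n μj ξj x ^ 2)
        ≤ (I + 1) * (μj / μi) ^ 2 := by
    intro μi μj ξi ξj hj hij
    calc _ ≤ I * (μj / μi) ^ 2 := main_bound hn μi μj ξi ξj hj hij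
      _ ≤ (I + 1) * (μj / μi) ^ 2 :=
          mul_le_mul_of_nonneg_right (by linarith) (sq_nonneg _)
  refine ⟨I + 1, by linarith, key, ?_⟩
  intro μ ν ξ η hν hle hten
  have h0 : ∀ m, 0 ≤ ∫ x : EuclideanSpace ℝ (Fin n),
      Ubub n (μ m) (ξ m) x ^ ((4 : ℝ) / ((n : ℝ) - 2)) * Ubub n (ν m) (η m) x ^ 2 := by
    intro m
    exact integral_nonneg fun x => mul_nonneg
      (Real.rpow_nonneg (Ubub_pos hn (lt_of_lt_of_le (hν m) (hle m)) (ξ m) x).le _)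
      (sq_nonneg _)
  have hupper : ∀ m, (∫ x : EuclideanSpace ℝ (Fin n),
      Ubub n (μ m) (ξ m) x ^ ((4 : ℝ) / ((n : ℝ) - 2)) * Ubub n (ν m) (η m) x ^ 2)
        ≤ (I + 1) * (ν m / μ m) ^ 2 :=
    fun m => key (μ m) (ν m) (ξ m) (η m) (hν m) (hle m)
  have hlim : Tendsto (fun m => (I + 1) * (ν m / μ m) ^ 2) atTop (nhds 0) := by
    have h2 : Tendsto (fun m => (ν m / μ m) ^ 2) atTop (nhds 0) := by
      simpa using hten.pow 2
    simpa using h2.const_mul (I + 1)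
  exact squeeze_zero h0 hupper hlim
end

section
/- Let $n \ge 3$, let $B_1 = B(\xi_1, r_1) \supset B_2 = B(\xi_2, r_2)$ be Euclidean balls with $\xi_2 \in B_1$, and consider two bubbles $U_1 = U_{\mu_1, \xi_1}$, $U_2 = U_{\mu_2, \xi_2}$ with $0 < \mu_2 \le \mu_1$, where $r_2 = \sqrt{\mu_1 \mu_2}$, $|\xi_1 - \xi_2| \le \mu_1$, and $U_{\mu,\xi}(x) = \mu^{-\frac{n-2}{2}}(1 + \frac{|x-\xi|^2}{n(n-2)\mu^2})^{1-n/2}$. Then there exists $C = C(n) > 0$ independent of $\mu_1, \mu_2$ such that $U_2 \le C\, U_1$ on $B_1 \setminus B_2$ and $U_1 \le C\, U_2$ on $B_2$. -/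
open MeasureTheory Filter

lemma ubub_eq (n : ℕ) (hn : 3 ≤ n) {μ : ℝ} (hμ : 0 < μ)
    (ξ x : EuclideanSpace ℝ (Fin n)) :
    Ubub n μ ξ x
      = (((n : ℝ) * ((n : ℝ) - 2) * μ ^ 2 + ‖x - ξ‖ ^ 2)
          / ((n : ℝ) * ((n : ℝ) - 2) * μ)) ^ (-(((n : ℝ) - 2) / 2)) := by
  have hn' : (3 : ℝ) ≤ (n : ℝ) := by exact_mod_cast hn
  have hc : (0 : ℝ) < (n : ℝ) * ((n : ℝ) - 2) := by nlinarith
  have hd : (0 : ℝ) ≤ ‖x - ξ‖ ^ 2 := sq_nonneg _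
  unfold Ubub U0
  have he : (1 : ℝ) - (n : ℝ) / 2 = -(((n : ℝ) - 2) / 2) := by ring
  rw [he, norm_smul, norm_inv, Real.norm_eq_abs, abs_of_pos hμ]
  have hA : (0 : ℝ) ≤ 1 + (μ⁻¹ * ‖x - ξ‖) ^ 2 / ((n : ℝ) * ((n : ℝ) - 2)) := by
    positivity
  rw [← Real.mul_rpow hμ.le hA]
  congr 1
  have hn2 : (n : ℝ) - 2 ≠ 0 := by linarith
  field_simp

lemma key_ineq {K x y p : ℝ} (hK : 0 < K) (hx : 0 < x) (hy : 0 < y) (hp : 0 ≤ p)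
    (h : x ≤ K * y) : y ^ (-p) ≤ K ^ p * x ^ (-p) := by
  have h1 : x ^ p ≤ (K * y) ^ p := Real.rpow_le_rpow hx.le h hp
  rw [Real.mul_rpow hK.le hy.le] at h1
  have hxp : 0 < x ^ p := Real.rpow_pos_of_pos hx p
  have hyp : 0 < y ^ p := Real.rpow_pos_of_pos hy p
  have hkp : 0 < K ^ p := Real.rpow_pos_of_pos hK p
  rw [Real.rpow_neg hx.le, Real.rpow_neg hy.le, ← one_div,
    ← div_eq_mul_inv, div_le_div_iff₀ hyp hxp]
  nlinarith

set_option maxHeartbeats 1000000 in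
/-- Radius of influence: with `B₂ = B(ξ₂, √(μ₁μ₂)) ⊆ B₁ = B(ξ₁, r₁)`, `ξ₂ ∈ B₁`,
`0 < μ₂ ≤ μ₁` and `|ξ₁ - ξ₂| ≤ μ₁`, there is `C = C(n)` independent of `μ₁, μ₂` with
`U₂ ≤ C U₁` on `B₁ \ B₂` and `U₁ ≤ C U₂` on `B₂`. -/
theorem stmt_18 (n : ℕ) (hn : 3 ≤ n) :
    ∃ C > (0 : ℝ), ∀ (μ1 μ2 r1 : ℝ) (ξ1 ξ2 : EuclideanSpace ℝ (Fin n)),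
      0 < μ2 → μ2 ≤ μ1 → ‖ξ1 - ξ2‖ ≤ μ1 →
      Metric.ball ξ2 (Real.sqrt (μ1 * μ2)) ⊆ Metric.ball ξ1 r1 →
      ξ2 ∈ Metric.ball ξ1 r1 →
      (∀ x ∈ Metric.ball ξ1 r1 \ Metric.ball ξ2 (Real.sqrt (μ1 * μ2)),
        Ubub n μ2 ξ2 x ≤ C * Ubub n μ1 ξ1 x) ∧
      (∀ x ∈ Metric.ball ξ2 (Real.sqrt (μ1 * μ2)),
        Ubub n μ1 ξ1 x ≤ C * Ubub n μ2 ξ2 x) := by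
  have hn' : (3 : ℝ) ≤ (n : ℝ) := by exact_mod_cast hn
  set c : ℝ := (n : ℝ) * ((n : ℝ) - 2) with hc_def
  have hc3 : (3 : ℝ) ≤ c := by nlinarith
  have hc : (0 : ℝ) < c := by linarith
  set p : ℝ := ((n : ℝ) - 2) / 2 with hp_def
  have hp : (0 : ℝ) ≤ p := by unfold p; linarith
  set K : ℝ := 2 * c + 2 with hK_def
  have hK : (0 : ℝ) < K := by unfold K; linarith
  refine ⟨K ^ p, Real.rpow_pos_of_pos hK p, ?_⟩
  intro μ1 μ2 r1 ξ1 ξ2 hμ2 hμ12 hξ hsub hξ2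
  have hμ1 : (0 : ℝ) < μ1 := lt_of_lt_of_le hμ2 hμ12
  constructor
  · intro x hx
    obtain ⟨hx1, hx2⟩ := hx
    have hd2 : Real.sqrt (μ1 * μ2) ≤ ‖x - ξ2‖ := by
      have := Metric.mem_ball.not.mp hx2
      rw [dist_eq_norm] at this
      linarith [not_lt.mp this]
    have hd2sq : μ1 * μ2 ≤ ‖x - ξ2‖ ^ 2 := by
      have h := Real.sq_sqrt (by positivity : (0:ℝ) ≤ μ1 * μ2)
      nlinarith [Real.sqrt_nonneg (μ1 * μ2), norm_nonneg (x - ξ2)]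
    have htri : ‖x - ξ1‖ ≤ ‖x - ξ2‖ + μ1 := by
      have h := norm_sub_le (x - ξ2) (ξ1 - ξ2)
      have : x - ξ1 = (x - ξ2) - (ξ1 - ξ2) := by abel
      rw [this]; linarith
    rw [ubub_eq n hn hμ2, ubub_eq n hn hμ1, ← hc_def]
    apply key_ineq hK (by positivity) (by positivity) hp
    rw [← mul_div_assoc, div_le_div_iff₀ (by positivity) (by positivity)]
    set d1 : ℝ := ‖x - ξ1‖ with hd1_def
    set d2 : ℝ := ‖x - ξ2‖ with hd2_def
    have hd1sq : d1 ^ 2 ≤ (d2 + μ1) ^ 2 := by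
      nlinarith [norm_nonneg (x - ξ1), norm_nonneg (x - ξ2)]
    have hin : (c * μ1 ^ 2 + d1 ^ 2) * μ2 ≤ K * ((c * μ2 ^ 2 + d2 ^ 2) * μ1) := by
      have h1 : c * (μ1 ^ 2 * μ2) ≤ c * (μ1 * d2 ^ 2) := by
        have : μ1 * (μ1 * μ2) ≤ μ1 * d2 ^ 2 :=
          mul_le_mul_of_nonneg_left hd2sq hμ1.le
        nlinarith
      have h2 : d1 ^ 2 * μ2 ≤ (d2 + μ1) ^ 2 * μ2 :=
        mul_le_mul_of_nonneg_right hd1sq hμ2.le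
      have h3 : (d2 + μ1) ^ 2 * μ2 ≤ 2 * d2 ^ 2 * μ2 + 2 * μ1 ^ 2 * μ2 := by
        nlinarith [mul_nonneg (sq_nonneg (d2 - μ1)) hμ2.le]
      have h4 : d2 ^ 2 * μ2 ≤ d2 ^ 2 * μ1 :=
        mul_le_mul_of_nonneg_left hμ12 (sq_nonneg d2)
      have h5 : μ1 ^ 2 * μ2 ≤ μ1 * d2 ^ 2 := by
        have : μ1 * (μ1 * μ2) ≤ μ1 * d2 ^ 2 :=
          mul_le_mul_of_nonneg_left hd2sq hμ1.le
        nlinarith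
      have h6 : (0:ℝ) ≤ (c - 2) * (d2 ^ 2 * μ1) :=
        mul_nonneg (by linarith) (mul_nonneg (sq_nonneg d2) hμ1.le)
      have h7 : (0:ℝ) ≤ (2 * c + 2) * c * (μ2 ^ 2 * μ1) :=
        mul_nonneg (mul_nonneg (by linarith) hc.le)
          (mul_nonneg (sq_nonneg μ2) hμ1.le)
      rw [hK_def]
      linarith [h1, h2, h3, h4, h5, h6, h7]
    linarith [mul_le_mul_of_nonneg_left hin hc.le]
  · intro x hx
    have hd2 : ‖x - ξ2‖ < Real.sqrt (μ1 * μ2) := by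
      rw [Metric.mem_ball, dist_eq_norm] at hx; exact hx
    have hd2sq : ‖x - ξ2‖ ^ 2 ≤ μ1 * μ2 := by
      have h := Real.sq_sqrt (by positivity : (0:ℝ) ≤ μ1 * μ2)
      nlinarith [norm_nonneg (x - ξ2), Real.sqrt_nonneg (μ1 * μ2)]
    rw [ubub_eq n hn hμ1, ubub_eq n hn hμ2, ← hc_def]
    apply key_ineq hK (by positivity) (by positivity) hp
    rw [← mul_div_assoc, div_le_div_iff₀ (by positivity) (by positivity)]
    set d1 : ℝ := ‖x - ξ1‖ with hd1_def
    set d2 : ℝ := ‖x - ξ2‖ with hd2_def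
    have hin : (c * μ2 ^ 2 + d2 ^ 2) * μ1 ≤ K * ((c * μ1 ^ 2 + d1 ^ 2) * μ2) := by
      have g1 : c * (μ2 ^ 2 * μ1) ≤ c * (μ1 ^ 2 * μ2) := by
        have : μ2 ^ 2 * μ1 ≤ μ1 ^ 2 * μ2 := by nlinarith [mul_pos hμ1 hμ2]
        exact mul_le_mul_of_nonneg_left this hc.le
      have g2 : d2 ^ 2 * μ1 ≤ μ1 ^ 2 * μ2 := by
        have : μ1 * d2 ^ 2 ≤ μ1 * (μ1 * μ2) :=
          mul_le_mul_of_nonneg_left hd2sq hμ1.le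
        nlinarith
      have g3 : (0:ℝ) ≤ (2 * c + 2) * (d1 ^ 2 * μ2) := by positivity
      have g5 : (0:ℝ) ≤ (2 * c ^ 2 + c - 1) * (μ1 ^ 2 * μ2) := by
        have h0 : (0:ℝ) ≤ 2 * c ^ 2 + c - 1 := by nlinarith
        exact mul_nonneg h0 (mul_nonneg (sq_nonneg μ1) hμ2.le)
      rw [hK_def]
      linarith [g1, g2, g3, g5]
    linarith [mul_le_mul_of_nonneg_left hin hc.le]
end
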